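/- Neyman's variance estimator satisfies E[V̂_Neyman] − Var(τ̂) = S_τ²/N ≥ 0, i.e., V̂_Neyman = s₁²/N₁ + s₀²/N₀ is conservative, with equality if and only if all unit-level causal effects are equal. -/

import Mathlib

open Finset

/-- Indicator of a Boolean as a real number. -/
noncomputable def ind (b : Bool) : ℝ := if b then 1 else 0

/-- The set of completely randomized assignments of `N1` of `N` units to treatment. -/
def assignments (N N1 : ℕ) : Finset (Fin N → Bool) :=
  Finset.univ.filter (fun w => (Finset.univ.filter (fun i => w i = true)).card = N1)

/-- Expectation of `f` under the uniform distribution over completely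
randomized assignments. -/
noncomputable def Eexp (N N1 : ℕ) (f : (Fin N → Bool) → ℝ) : ℝ :=
  (∑ w ∈ assignments N N1, f w) / (assignments N N1).card

lemma mem_assignments {N N1 : ℕ} {w : Fin N → Bool} :
    w ∈ assignments N N1 ↔ (Finset.univ.filter (fun i => w i = true)).card = N1 := by
  simp [assignments]

lemma ind_mul_self (b : Bool) : ind b * ind b = ind b := by cases b <;> simp [ind]

lemma sum_ind_eq {N N1 : ℕ} {w : Fin N → Bool} (hw : w ∈ assignments N N1) :
    ∑ i, ind (w i) = (N1 : ℝ) := by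
  rw [mem_assignments] at hw
  have : ∑ i, ind (w i) = ∑ i, (if w i = true then (1:ℝ) else 0) := by
    apply Finset.sum_congr rfl; intro i _; simp [ind]
  rw [this, Finset.sum_boole, hw]

lemma sum_comp_perm {N N1 : ℕ} (σ : Equiv.Perm (Fin N)) (F : (Fin N → Bool) → ℝ) :
    ∑ w ∈ assignments N N1, F (fun i => w (σ i)) = ∑ w ∈ assignments N N1, F w := by
  apply Finset.sum_nbij' (i := fun w => fun i => w (σ i)) (j := fun w => fun i => w (σ.symm i))
  · intro w hw
    rw [mem_assignments] at hw ⊢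
    rw [← hw]
    apply Finset.card_bij' (i := fun a _ => σ a) (j := fun a _ => σ.symm a) <;>
      intro a ha <;> simp_all
  · intro w hw
    rw [mem_assignments] at hw ⊢
    rw [← hw]
    apply Finset.card_bij' (i := fun a _ => σ.symm a) (j := fun a _ => σ a) <;>
      intro a ha <;> simp_all
  · intro w _; funext i; simp
  · intro w _; funext i; simp
  · intro w _; rfl

/-- single-index sum is independent of the index -/
lemma S_indep {N N1 : ℕ} (i j : Fin N) :
    ∑ w ∈ assignments N N1, ind (w i) = ∑ w ∈ assignments N N1, ind (w j) := by
  have := sum_comp_perm (N1 := N1) (Equiv.swap i j) (fun w => ind (w i))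
  simpa [Equiv.swap_apply_left] using this.symm

lemma S_val {N N1 : ℕ} (i : Fin N) :
    (N : ℝ) * ∑ w ∈ assignments N N1, ind (w i) =
      (N1 : ℝ) * (assignments N N1).card := by
  have h1 : ∑ j : Fin N, ∑ w ∈ assignments N N1, ind (w j)
      = (N1 : ℝ) * (assignments N N1).card := by
    rw [Finset.sum_comm]
    rw [Finset.sum_congr rfl (fun w hw => sum_ind_eq hw)]
    rw [Finset.sum_const, nsmul_eq_mul, mul_comm]
  have h2 : ∑ j : Fin N, ∑ w ∈ assignments N N1, ind (w j)
      = (N : ℝ) * ∑ w ∈ assignments N N1, ind (w i) := by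
    rw [Finset.sum_congr rfl (fun j _ => S_indep j i)]
    rw [Finset.sum_const, nsmul_eq_mul]
    simp
  rw [← h2, h1]

lemma P_indep {N N1 : ℕ} (i : Fin N) {j k : Fin N} (hj : j ≠ i) (hk : k ≠ i) :
    ∑ w ∈ assignments N N1, ind (w i) * ind (w j)
      = ∑ w ∈ assignments N N1, ind (w i) * ind (w k) := by
  have := sum_comp_perm (N1 := N1) (Equiv.swap j k) (fun w => ind (w i) * ind (w j))
  have hσi : Equiv.swap j k i = i := Equiv.swap_apply_of_ne_of_ne (Ne.symm hj) (Ne.symm hk)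
  have hσj : Equiv.swap j k j = k := Equiv.swap_apply_left j k
  simp only [hσi, hσj] at this
  exact this.symm

lemma P_val {N N1 : ℕ} (hN : 1 ≤ N) {i j : Fin N} (hij : j ≠ i) :
    ((N : ℝ) - 1) * ∑ w ∈ assignments N N1, ind (w i) * ind (w j)
      = ((N1 : ℝ) - 1) * ∑ w ∈ assignments N N1, ind (w i) := by
  have h1 : ∑ k ∈ Finset.univ.erase i, ∑ w ∈ assignments N N1, ind (w i) * ind (w k)
      = ((N1 : ℝ) - 1) * ∑ w ∈ assignments N N1, ind (w i) := by
    rw [Finset.sum_comm]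
    rw [Finset.mul_sum]
    apply Finset.sum_congr rfl
    intro w hw
    rw [← Finset.mul_sum]
    have hsum : ∑ k ∈ Finset.univ.erase i, ind (w k) = (N1 : ℝ) - ind (w i) := by
      have := sum_ind_eq hw
      have h := Finset.add_sum_erase Finset.univ (fun k => ind (w k)) (Finset.mem_univ i)
      rw [this] at h
      linarith
    rw [hsum, mul_sub, ind_mul_self]
    ring
  have h2 : ∑ k ∈ Finset.univ.erase i, ∑ w ∈ assignments N N1, ind (w i) * ind (w k)
      = ((N : ℝ) - 1) * ∑ w ∈ assignments N N1, ind (w i) * ind (w j) := by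
    rw [Finset.sum_congr rfl (fun k hk => P_indep i (Finset.ne_of_mem_erase hk) hij)]
    rw [Finset.sum_const, nsmul_eq_mul, Finset.card_erase_of_mem (Finset.mem_univ i)]
    congr 1
    simp only [Finset.card_univ, Fintype.card_fin]
    push_cast [hN]
    ring
  rw [← h2, h1]

lemma lin_sum {N N1 : ℕ} (f : Fin N → ℝ) :
    (N : ℝ) * ∑ w ∈ assignments N N1, (∑ i, ind (w i) * f i)
      = (N1 : ℝ) * (assignments N N1).card * ∑ i, f i := by
  rw [Finset.sum_comm, Finset.mul_sum]
  have : ∀ i : Fin N, (N:ℝ) * ∑ w ∈ assignments N N1, ind (w i) * f i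
      = ((N1 : ℝ) * (assignments N N1).card) * f i := by
    intro i
    rw [← Finset.sum_mul, ← mul_assoc, S_val]
  rw [Finset.sum_congr rfl (fun i _ => this i), ← Finset.mul_sum]

lemma quad_sum {N N1 : ℕ} (hN : 1 ≤ N) (f g : Fin N → ℝ) :
    (N : ℝ) * ((N : ℝ) - 1) *
      ∑ w ∈ assignments N N1, (∑ i, ind (w i) * f i) * (∑ j, ind (w j) * g j)
    = (N1 : ℝ) * (assignments N N1).card *
      (((N:ℝ) - (N1:ℝ)) * ∑ i, f i * g i +
       ((N1:ℝ) - 1) * (∑ i, f i) * (∑ i, g i)) := by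
  classical
  set c : ℝ := ((assignments N N1).card : ℝ) with hc
  have step1 : ∑ w ∈ assignments N N1, (∑ i, ind (w i) * f i) * (∑ j, ind (w j) * g j)
      = ∑ i, ∑ j, (f i * g j) * ∑ w ∈ assignments N N1, ind (w i) * ind (w j) := by
    rw [Finset.sum_congr rfl (fun w _ => Finset.sum_mul_sum Finset.univ Finset.univ
      (fun i => ind (w i) * f i) (fun j => ind (w j) * g j))]
    rw [Finset.sum_comm]
    apply Finset.sum_congr rfl
    intro i _
    rw [Finset.sum_comm]
    apply Finset.sum_congr rfl
    intro j _
    rw [Finset.mul_sum]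
    apply Finset.sum_congr rfl
    intro w _
    ring
  rw [step1]
  have step2 : ∀ i : Fin N, (N : ℝ) * ((N : ℝ) - 1) *
      (∑ j, (f i * g j) * ∑ w ∈ assignments N N1, ind (w i) * ind (w j))
      = ((N1 : ℝ) * c * ((N:ℝ) - (N1:ℝ))) * (f i * g i)
        + ((N1 : ℝ) * c * ((N1:ℝ) - 1) * (∑ j, g j)) * f i := by
    intro i
    have hsplit := Finset.add_sum_erase Finset.univ
      (fun j => (f i * g j) * ∑ w ∈ assignments N N1, ind (w i) * ind (w j))
      (Finset.mem_univ i)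
    have hdiag : ∑ w ∈ assignments N N1, ind (w i) * ind (w i)
        = ∑ w ∈ assignments N N1, ind (w i) :=
      Finset.sum_congr rfl (fun w _ => ind_mul_self _)
    have hS := S_val (N1 := N1) i
    have hoff2 : (N:ℝ)*((N:ℝ)-1) * ∑ j ∈ Finset.univ.erase i,
          (f i * g j) * ∑ w ∈ assignments N N1, ind (w i) * ind (w j)
        = ((N1:ℝ) * c * ((N1:ℝ)-1) * f i) * (∑ j ∈ Finset.univ.erase i, g j) := by
      rw [Finset.mul_sum]
      rw [Finset.sum_congr rfl (fun j hj => show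
          (N:ℝ)*((N:ℝ)-1) * ((f i * g j) * ∑ w ∈ assignments N N1, ind (w i) * ind (w j))
          = ((N1:ℝ) * c * ((N1:ℝ)-1) * f i) * g j by
        linear_combination (f i * g j) * ((N:ℝ) * P_val (N1 := N1) hN (Finset.ne_of_mem_erase hj)
          + ((N1:ℝ) - 1) * hS))]
      rw [← Finset.mul_sum]
    have herase : ∑ j ∈ Finset.univ.erase i, g j = (∑ j, g j) - g i := by
      have h := Finset.add_sum_erase Finset.univ g (Finset.mem_univ i)
      linarith
    rw [herase] at hoff2
    linear_combination ((N:ℝ)*((N:ℝ)-1)) * hsplit.symm + hoff2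
      + ((N:ℝ)-1) * (f i * g i) * hS + (N:ℝ)*((N:ℝ)-1)*(f i * g i) * hdiag
  rw [Finset.mul_sum, Finset.sum_congr rfl (fun i _ => step2 i)]
  rw [Finset.sum_add_distrib, ← Finset.mul_sum, ← Finset.mul_sum]
  ring

lemma assignments_nonempty {N N1 : ℕ} (h : N1 ≤ N) : (assignments N N1).Nonempty := by
  refine ⟨fun i => decide (i.val < N1), ?_⟩
  rw [mem_assignments]
  simp only [decide_eq_true_eq]
  have : (Finset.univ.filter (fun i : Fin N => i.val < N1)) =
      (Finset.univ : Finset (Fin N1)).map (Fin.castLEEmb h) := by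
    ext i
    simp only [Finset.mem_filter, Finset.mem_univ, true_and, Finset.mem_map]
    constructor
    · intro hi; exact ⟨⟨i.val, hi⟩, by simp [Fin.castLEEmb, Fin.castLE]⟩
    · rintro ⟨j, _, rfl⟩; simpa using j.isLt
  rw [this, Finset.card_map, Finset.card_univ, Fintype.card_fin]

lemma sum_one_sub_mul {N N1 : ℕ} (w : Fin N → Bool) (Y : Fin N → ℝ) :
    ∑ i, (1 - ind (w i)) * Y i = (∑ i, Y i) - ∑ i, ind (w i) * Y i := by
  rw [show (∑ i, Y i) - ∑ i, ind (w i) * Y i = ∑ i, (Y i - ind (w i) * Y i) by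
    rw [Finset.sum_sub_distrib]]
  apply Finset.sum_congr rfl; intro i _; ring

lemma expand_sq_sum {N N1 : ℕ} {w : Fin N → Bool} (hw : w ∈ assignments N N1)
    (Y : Fin N → ℝ) (m : ℝ) :
    ∑ i, ind (w i) * (Y i - m) ^ 2
      = (∑ i, ind (w i) * Y i ^ 2) - 2*m*(∑ i, ind (w i) * Y i) + m^2 * (N1:ℝ) := by
  have h : ∀ i : Fin N, ind (w i) * (Y i - m)^2
      = ind (w i) * Y i^2 - (2*m)*(ind (w i) * Y i) + m^2 * ind (w i) := fun i => by ring
  rw [Finset.sum_congr rfl (fun i _ => h i), Finset.sum_add_distrib, Finset.sum_sub_distrib,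
    ← Finset.mul_sum, ← Finset.mul_sum, sum_ind_eq hw]

lemma sum_one_sub_ind {N N1 N0 : ℕ} (hN : N = N1 + N0) {w : Fin N → Bool}
    (hw : w ∈ assignments N N1) :
    ∑ i, (1 - ind (w i)) = (N0 : ℝ) := by
  rw [Finset.sum_sub_distrib, sum_ind_eq hw, Finset.sum_const, Finset.card_univ,
    Fintype.card_fin, nsmul_eq_mul, mul_one, hN]
  push_cast; ring

lemma expand_sq_sum' {N N1 N0 : ℕ} (hN : N = N1 + N0) {w : Fin N → Bool}
    (hw : w ∈ assignments N N1) (Y : Fin N → ℝ) (m : ℝ) :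
    ∑ i, (1 - ind (w i)) * (Y i - m) ^ 2
      = ((∑ i, Y i ^ 2) - ∑ i, ind (w i) * Y i ^ 2)
        - 2*m*((∑ i, Y i) - ∑ i, ind (w i) * Y i) + m^2 * (N0:ℝ) := by
  have h : ∀ i : Fin N, (1 - ind (w i)) * (Y i - m)^2
      = (1 - ind (w i)) * Y i^2 - (2*m)*((1 - ind (w i)) * Y i)
        + m^2 * (1 - ind (w i)) := fun i => by ring
  rw [Finset.sum_congr rfl (fun i _ => h i), Finset.sum_add_distrib, Finset.sum_sub_distrib,
    ← Finset.mul_sum, ← Finset.mul_sum, sum_one_sub_ind hN hw,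
    sum_one_sub_mul (N1 := N1) w Y, sum_one_sub_mul (N1 := N1) w (fun i => Y i ^ 2)]

lemma sum_sq_dev {N : ℕ} (Y : Fin N → ℝ) (m : ℝ) :
    ∑ i, (Y i - m)^2 = (∑ i, Y i^2) - 2*m*(∑ i, Y i) + (N:ℝ)*m^2 := by
  have h : ∀ i : Fin N, (Y i - m)^2 = Y i^2 - (2*m)*(Y i) + m^2 := fun i => by ring
  rw [Finset.sum_congr rfl (fun i _ => h i), Finset.sum_add_distrib, Finset.sum_sub_distrib,
    ← Finset.mul_sum, Finset.sum_const, Finset.card_univ, Fintype.card_fin, nsmul_eq_mul]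


set_option maxHeartbeats 4000000 in
theorem neyman_variance_estimator_conservative (N N1 N0 : ℕ) (hN : N = N1 + N0)
    (hN1 : 2 ≤ N1) (hN0 : 2 ≤ N0) (Y1 Y0 : Fin N → ℝ)
    (p1 p0 S1sq S0sq Stau2 : ℝ)
    (hp1 : p1 = (∑ i, Y1 i) / N) (hp0 : p0 = (∑ i, Y0 i) / N)
    (hS1 : S1sq = (∑ i, (Y1 i - p1) ^ 2) / ((N : ℝ) - 1))
    (hS0 : S0sq = (∑ i, (Y0 i - p0) ^ 2) / ((N : ℝ) - 1))
    (hStau : Stau2 = (∑ i, ((Y1 i - Y0 i) - (p1 - p0)) ^ 2) / ((N : ℝ) - 1))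
    (tauhat Vhat : (Fin N → Bool) → ℝ)
    (htauhat : ∀ w, tauhat w =
      (∑ i, ind (w i) * Y1 i) / N1 - (∑ i, (1 - ind (w i)) * Y0 i) / N0)
    (hVhat : ∀ w, Vhat w =
      ((∑ i, ind (w i) * (Y1 i - (∑ j, ind (w j) * Y1 j) / N1) ^ 2) / ((N1 : ℝ) - 1)) / N1 +
      ((∑ i, (1 - ind (w i)) * (Y0 i - (∑ j, (1 - ind (w j)) * Y0 j) / N0) ^ 2) /
        ((N0 : ℝ) - 1)) / N0) :
    Eexp N N1 Vhat - Eexp N N1 (fun w => (tauhat w - (p1 - p0)) ^ 2) = Stau2 / N ∧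
    0 ≤ Stau2 / N ∧
    (Eexp N N1 Vhat = Eexp N N1 (fun w => (tauhat w - (p1 - p0)) ^ 2) ↔
      ∀ i j, Y1 i - Y0 i = Y1 j - Y0 j) := by
  have h2r1 : (2:ℝ) ≤ (N1:ℝ) := by exact_mod_cast hN1
  have h2r0 : (2:ℝ) ≤ (N0:ℝ) := by exact_mod_cast hN0
  have h4r : (4:ℝ) ≤ (N:ℝ) := by
    have : 4 ≤ N := by omega
    exact_mod_cast this
  have hn1 : (N1:ℝ) ≠ 0 := by linarith
  have hn1' : (N1:ℝ) - 1 ≠ 0 := by linarith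
  have hn0 : (N0:ℝ) ≠ 0 := by linarith
  have hn0' : (N0:ℝ) - 1 ≠ 0 := by linarith
  have hn : (N:ℝ) ≠ 0 := by linarith
  have hn' : (N:ℝ) - 1 ≠ 0 := by linarith
  have hNr : (N:ℝ) = (N1:ℝ) + (N0:ℝ) := by rw [hN]; push_cast; ring
  have hs : (N1:ℝ) + (N0:ℝ) ≠ 0 := by rw [← hNr]; exact hn
  have hs' : (N1:ℝ) + (N0:ℝ) - 1 ≠ 0 := by rw [← hNr]; exact hn'
  have hne := assignments_nonempty (N := N) (N1 := N1) (by omega)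
  have hcpos : 0 < ((assignments N N1).card : ℝ) := by
    exact_mod_cast Finset.card_pos.mpr hne
  have hc : ((assignments N N1).card : ℝ) ≠ 0 := ne_of_gt hcpos
  have Ld : ∀ f : Fin N → ℝ, ∑ w ∈ assignments N N1, (∑ i, ind (w i) * f i)
      = (N1:ℝ) * ((assignments N N1).card : ℝ) * (∑ i, f i) / N := by
    intro f; rw [eq_div_iff hn]; linear_combination lin_sum (N1 := N1) f
  have Qd : ∀ f g : Fin N → ℝ,
      ∑ w ∈ assignments N N1, (∑ i, ind (w i) * f i) * (∑ j, ind (w j) * g j)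
      = (N1:ℝ) * ((assignments N N1).card : ℝ) *
          (((N:ℝ)-(N1:ℝ)) * (∑ i, f i * g i)
            + ((N1:ℝ)-1) * (∑ i, f i) * (∑ i, g i)) / ((N:ℝ)*((N:ℝ)-1)) := by
    intro f g; rw [eq_div_iff (mul_ne_zero hn hn')]
    linear_combination quad_sum (N1 := N1) (by omega : 1 ≤ N) f g
  have hsqY1 : ∑ i, Y1 i * Y1 i = ∑ i, Y1 i ^ 2 := by
    apply Finset.sum_congr rfl; intros; ring
  have hsqY0 : ∑ i, Y0 i * Y0 i = ∑ i, Y0 i ^ 2 := by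
    apply Finset.sum_congr rfl; intros; ring
  -- pointwise forms
  have hVpt : ∀ w ∈ assignments N N1, Vhat w =
      (1/(((N1:ℝ)-1)*(N1:ℝ))) * (∑ i, ind (w i) * Y1 i ^ 2)
      + (-(1/(((N1:ℝ)-1)*(N1:ℝ)^2))) * ((∑ i, ind (w i) * Y1 i) * (∑ j, ind (w j) * Y1 j))
      + (-(1/(((N0:ℝ)-1)*(N0:ℝ)))) * (∑ i, ind (w i) * Y0 i ^ 2)
      + (-(1/(((N0:ℝ)-1)*(N0:ℝ)^2))) * ((∑ i, ind (w i) * Y0 i) * (∑ j, ind (w j) * Y0 j))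
      + (2*(∑ i, Y0 i)/(((N0:ℝ)-1)*(N0:ℝ)^2)) * (∑ i, ind (w i) * Y0 i)
      + ((∑ i, Y0 i ^ 2)/(((N0:ℝ)-1)*(N0:ℝ))
          - (∑ i, Y0 i)^2/(((N0:ℝ)-1)*(N0:ℝ)^2)) := by
    intro w hw
    rw [hVhat w, sum_one_sub_mul (N1 := N1) w Y0,
      expand_sq_sum hw Y1, expand_sq_sum' hN hw Y0]
    field_simp
    ring
  have htpt : ∀ w, (tauhat w - (p1 - p0))^2 =
      (1/(N1:ℝ)^2) * ((∑ i, ind (w i) * Y1 i) * (∑ j, ind (w j) * Y1 j))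
      + (1/(N0:ℝ)^2) * ((∑ i, ind (w i) * Y0 i) * (∑ j, ind (w j) * Y0 j))
      + (2/((N1:ℝ)*(N0:ℝ))) * ((∑ i, ind (w i) * Y1 i) * (∑ j, ind (w j) * Y0 j))
      + (-(2*((∑ i, Y0 i)/(N0:ℝ) + (p1 - p0))/(N1:ℝ))) * (∑ i, ind (w i) * Y1 i)
      + (-(2*((∑ i, Y0 i)/(N0:ℝ) + (p1 - p0))/(N0:ℝ))) * (∑ i, ind (w i) * Y0 i)
      + ((∑ i, Y0 i)/(N0:ℝ) + (p1 - p0))^2 := by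
    intro w
    rw [htauhat w, sum_one_sub_mul (N1 := N1) w Y0]
    field_simp
    ring
  have hEV : Eexp N N1 Vhat = S1sq/(N1:ℝ) + S0sq/(N0:ℝ) := by
    simp only [Eexp]
    rw [Finset.sum_congr rfl hVpt]
    rw [Finset.sum_add_distrib, Finset.sum_add_distrib, Finset.sum_add_distrib,
      Finset.sum_add_distrib, Finset.sum_add_distrib]
    rw [← Finset.mul_sum, ← Finset.mul_sum, ← Finset.mul_sum, ← Finset.mul_sum,
      ← Finset.mul_sum, Finset.sum_const, nsmul_eq_mul]
    rw [Qd Y1 Y1, Qd Y0 Y0, Ld (fun i => Y1 i ^ 2), Ld (fun i => Y0 i ^ 2), Ld Y0,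
      hsqY1, hsqY0]
    rw [hS1, hS0, sum_sq_dev Y1 p1, sum_sq_dev Y0 p0, hp1, hp0, hNr]
    set c : ℝ := ((assignments N N1).card : ℝ) with hcdef
    set F1 : ℝ := ∑ i, Y1 i with hF1
    set F0 : ℝ := ∑ i, Y0 i with hF0
    set Q1 : ℝ := ∑ i, Y1 i ^ 2 with hQ1
    set Q0 : ℝ := ∑ i, Y0 i ^ 2 with hQ0
    have e1 : 1 / (((N1:ℝ) - 1) * (N1:ℝ)) * ((N1:ℝ) * c * Q1 / ((N1:ℝ) + (N0:ℝ))) +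
          -(1 / (((N1:ℝ) - 1) * (N1:ℝ) ^ 2)) *
            ((N1:ℝ) * c * (((N1:ℝ) + (N0:ℝ) - (N1:ℝ)) * Q1 + ((N1:ℝ) - 1) * F1 * F1) /
              (((N1:ℝ) + (N0:ℝ)) * ((N1:ℝ) + (N0:ℝ) - 1)))
        = (Q1 - 2 * (F1 / ((N1:ℝ) + (N0:ℝ))) * F1 +
            ((N1:ℝ) + (N0:ℝ)) * (F1 / ((N1:ℝ) + (N0:ℝ))) ^ 2) / ((N1:ℝ) + (N0:ℝ) - 1) / (N1:ℝ) * c := by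
      field_simp
      ring
    have e2 : -(1 / (((N0:ℝ) - 1) * (N0:ℝ))) * ((N1:ℝ) * c * Q0 / ((N1:ℝ) + (N0:ℝ))) +
          -(1 / (((N0:ℝ) - 1) * (N0:ℝ) ^ 2)) *
            ((N1:ℝ) * c * (((N1:ℝ) + (N0:ℝ) - (N1:ℝ)) * Q0 + ((N1:ℝ) - 1) * F0 * F0) /
              (((N1:ℝ) + (N0:ℝ)) * ((N1:ℝ) + (N0:ℝ) - 1))) +
          2 * F0 / (((N0:ℝ) - 1) * (N0:ℝ) ^ 2) * ((N1:ℝ) * c * F0 / ((N1:ℝ) + (N0:ℝ))) +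
          c * (Q0 / (((N0:ℝ) - 1) * (N0:ℝ)) - F0 ^ 2 / (((N0:ℝ) - 1) * (N0:ℝ) ^ 2))
        = (Q0 - 2 * (F0 / ((N1:ℝ) + (N0:ℝ))) * F0 +
            ((N1:ℝ) + (N0:ℝ)) * (F0 / ((N1:ℝ) + (N0:ℝ))) ^ 2) / ((N1:ℝ) + (N0:ℝ) - 1) / (N0:ℝ) * c := by
      field_simp
      ring
    rw [div_eq_iff hc]
    linear_combination e1 + e2
  have hEVar : Eexp N N1 (fun w => (tauhat w - (p1 - p0)) ^ 2)
      = S1sq/(N1:ℝ) + S0sq/(N0:ℝ) - Stau2/(N:ℝ) := by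
    simp only [Eexp]
    rw [Finset.sum_congr rfl (fun w _ => htpt w)]
    rw [Finset.sum_add_distrib, Finset.sum_add_distrib, Finset.sum_add_distrib,
      Finset.sum_add_distrib, Finset.sum_add_distrib]
    rw [← Finset.mul_sum, ← Finset.mul_sum, ← Finset.mul_sum, ← Finset.mul_sum,
      ← Finset.mul_sum, Finset.sum_const, nsmul_eq_mul]
    rw [Qd Y1 Y1, Qd Y0 Y0, Qd Y1 Y0, Ld Y1, Ld Y0, hsqY1, hsqY0]
    rw [hS1, hS0, hStau, sum_sq_dev Y1 p1, sum_sq_dev Y0 p0,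
      sum_sq_dev (fun i => Y1 i - Y0 i) (p1 - p0)]
    have hd2 : ∑ i, (Y1 i - Y0 i)^2
        = (∑ i, Y1 i^2) - 2*(∑ i, Y1 i * Y0 i) + (∑ i, Y0 i^2) := by
      have h : ∀ i : Fin N, (Y1 i - Y0 i)^2
          = Y1 i^2 - 2*(Y1 i * Y0 i) + Y0 i^2 := fun i => by ring
      rw [Finset.sum_congr rfl (fun i _ => h i), Finset.sum_add_distrib,
        Finset.sum_sub_distrib, ← Finset.mul_sum]
    have hd1 : ∑ i, (Y1 i - Y0 i) = (∑ i, Y1 i) - (∑ i, Y0 i) := Finset.sum_sub_distrib _ _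
    rw [hd2, hd1, hp1, hp0, hNr]
    set c : ℝ := ((assignments N N1).card : ℝ) with hcdef
    set F1 : ℝ := ∑ i, Y1 i with hF1
    set F0 : ℝ := ∑ i, Y0 i with hF0
    set Q1 : ℝ := ∑ i, Y1 i ^ 2 with hQ1
    set Q0 : ℝ := ∑ i, Y0 i ^ 2 with hQ0
    set M : ℝ := ∑ i, Y1 i * Y0 i with hM
    set n1 : ℝ := (N1:ℝ) with hn1d
    set n0 : ℝ := (N0:ℝ) with hn0d
    have e11 : 1/n1^2 * (n1*c*(((n1+n0)-n1)*Q1 + (n1-1)*F1*F1)/((n1+n0)*((n1+n0)-1)))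
          + (-(2*(F1/(n1+n0))/n1))*(n1*c*F1/(n1+n0)) + c*(F1/(n1+n0))^2
        = ((Q1 - 2*(F1/(n1+n0))*F1 + (n1+n0)*(F1/(n1+n0))^2)/((n1+n0)-1)/n1
            - (Q1 - 2*(F1/(n1+n0))*F1 + (n1+n0)*(F1/(n1+n0))^2)/((n1+n0)-1)/(n1+n0)) * c := by
      field_simp
      ring
    have e00 : 1/n0^2 * (n1*c*(((n1+n0)-n1)*Q0 + (n1-1)*F0*F0)/((n1+n0)*((n1+n0)-1)))
          + (-(2*(F0/n0 - F0/(n1+n0))/n0))*(n1*c*F0/(n1+n0)) + c*(F0/n0 - F0/(n1+n0))^2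
        = ((Q0 - 2*(F0/(n1+n0))*F0 + (n1+n0)*(F0/(n1+n0))^2)/((n1+n0)-1)/n0
            - (Q0 - 2*(F0/(n1+n0))*F0 + (n1+n0)*(F0/(n1+n0))^2)/((n1+n0)-1)/(n1+n0)) * c := by
      field_simp
      ring
    have e10 : 2/(n1*n0) * (n1*c*(((n1+n0)-n1)*M + (n1-1)*F1*F0)/((n1+n0)*((n1+n0)-1)))
          + (-(2*(F0/n0 - F0/(n1+n0))/n1))*(n1*c*F1/(n1+n0))
          + (-(2*(F1/(n1+n0))/n0))*(n1*c*F0/(n1+n0))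
          + 2*c*(F1/(n1+n0))*(F0/n0 - F0/(n1+n0))
        = ((2*M - 4*(F1/(n1+n0))*F0 + 2*(n1+n0)*(F1/(n1+n0))*(F0/(n1+n0)))/((n1+n0)-1)/(n1+n0)) * c := by
      field_simp
      ring
    rw [div_eq_iff hc]
    linear_combination e11 + e00 + e10
  have hmain : Eexp N N1 Vhat - Eexp N N1 (fun w => (tauhat w - (p1 - p0)) ^ 2)
      = Stau2 / N := by rw [hEV, hEVar]; ring
  refine ⟨hmain, ?_, ?_⟩
  · have hst : 0 ≤ Stau2 := by
      rw [hStau]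
      apply div_nonneg (Finset.sum_nonneg fun i _ => sq_nonneg _)
      linarith
    exact div_nonneg hst (by linarith)
  · constructor
    · intro h
      have h0 : Stau2 / (N:ℝ) = 0 := by rw [← hmain, h, sub_self]
      have h1 : Stau2 = 0 := by
        rcases div_eq_zero_iff.mp h0 with h | h
        · exact h
        · exact absurd h hn
      rw [hStau] at h1
      have h2 : ∑ i, ((Y1 i - Y0 i) - (p1 - p0))^2 = 0 := by
        rcases div_eq_zero_iff.mp h1 with h | h
        · exact h
        · exact absurd h hn'
      have h3 := (Finset.sum_eq_zero_iff_of_nonneg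
        (fun i (_ : i ∈ Finset.univ) => sq_nonneg ((Y1 i - Y0 i) - (p1 - p0)))).mp h2
      intro i j
      have hi : Y1 i - Y0 i = p1 - p0 := by
        have := h3 i (Finset.mem_univ i)
        have := pow_eq_zero_iff (n := 2) (by norm_num) |>.mp this
        linarith
      have hj : Y1 j - Y0 j = p1 - p0 := by
        have := h3 j (Finset.mem_univ j)
        have := pow_eq_zero_iff (n := 2) (by norm_num) |>.mp this
        linarith
      rw [hi, hj]
    · intro hall
      have hdi : ∀ i : Fin N, Y1 i - Y0 i = p1 - p0 := by
        intro i
        have hsum : ∑ j, (Y1 j - Y0 j) = (N:ℝ) * (Y1 i - Y0 i) := by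
          rw [Finset.sum_congr rfl (fun j _ => hall j i), Finset.sum_const,
            Finset.card_univ, Fintype.card_fin, nsmul_eq_mul]
        have htau : p1 - p0 = (∑ j, (Y1 j - Y0 j))/(N:ℝ) := by
          rw [hp1, hp0, Finset.sum_sub_distrib]; ring
        rw [htau, hsum, mul_div_cancel_left₀ _ hn]
      have hst0 : Stau2 = 0 := by
        rw [hStau, Finset.sum_eq_zero (fun i _ => by rw [hdi i]; simp), zero_div]
      have := hmain
      rw [hst0, zero_div] at this
      linarith [this]
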